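/- Consider A = [[1, 0, 2], [0, 2, −2]] ∈ ℝ^{2×3} and b = (1, 1)^T. For every λ ∈ (0, 1) and every t ∈ [0, (1 − λ)/2), the vector x(t) = (1 − λ − 2t, (2 − λ + 4t)/4, t)^T is a minimizer of x ↦ (1/2)‖Ax − b‖² + λ‖x‖₁. In particular, for each λ ∈ (0, 1) the LASSO solution is not unique. -/
import Mathlib


open Finset Matrix

/-- The ℓ1-norm on ℝⁿ. -/
def l1 {n : ℕ} (x : Fin n → ℝ) : ℝ := ∑ i, |x i|

lemma lasso_key (lam : ℝ) (h0 : 0 < lam) (h1 : lam < 1) (t : ℝ) (ht0 : 0 ≤ t)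
    (ht1 : t < (1 - lam)/2) (x : Fin 3 → ℝ) :
    (1/2) * (∑ j, ((!![1, 0, 2; 0, 2, -2] : Matrix (Fin 2) (Fin 3) ℝ).mulVec
        ![1 - lam - 2*t, (2 - lam + 4*t)/4, t] j - ![(1:ℝ), 1] j)^2)
      + lam * l1 ![1 - lam - 2*t, (2 - lam + 4*t)/4, t]
    ≤ (1/2) * (∑ j, ((!![1, 0, 2; 0, 2, -2] : Matrix (Fin 2) (Fin 3) ℝ).mulVec x j
        - ![(1:ℝ), 1] j)^2) + lam * l1 x := by
  have e0 : |1 - lam - 2*t| = 1 - lam - 2*t := abs_of_nonneg (by linarith)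
  have e1 : |(2 - lam + 4*t)/4| = (2 - lam + 4*t)/4 := abs_of_nonneg (by linarith)
  have e2 : |t| = t := abs_of_nonneg ht0
  simp only [l1, Fin.sum_univ_two, Fin.sum_univ_three, Matrix.mulVec, dotProduct,
    Fin.isValue, Matrix.cons_val_zero, Matrix.cons_val_one, Matrix.head_cons,
    Matrix.cons_val', Matrix.empty_val', Matrix.cons_val_fin_one, Matrix.head_fin_const,
    Matrix.cons_val_succ, Matrix.of_apply, Matrix.cons_val_two, Matrix.tail_cons, e0, e1, e2]
  nlinarith [le_abs_self (x 0), le_abs_self (x 1), le_abs_self (x 2),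
    sq_nonneg (x 0 + 2*x 2 - 1 + lam), sq_nonneg (2*x 1 - 2*x 2 - 1 + lam/2)]

theorem lasso_example_nonunique :
    let A : Matrix (Fin 2) (Fin 3) ℝ := !![1, 0, 2; 0, 2, -2]
    let b : Fin 2 → ℝ := ![1, 1]
    let f : ℝ → (Fin 3 → ℝ) → ℝ := fun lam x =>
      (1/2) * (∑ j, (A.mulVec x j - b j)^2) + lam * l1 x
    (∀ lam : ℝ, 0 < lam → lam < 1 → ∀ t : ℝ, 0 ≤ t → t < (1 - lam)/2 →
      ∀ x : Fin 3 → ℝ,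
        f lam ![1 - lam - 2*t, (2 - lam + 4*t)/4, t] ≤ f lam x) ∧
    (∀ lam : ℝ, 0 < lam → lam < 1 →
      ∃ y z : Fin 3 → ℝ, y ≠ z ∧ (∀ x, f lam y ≤ f lam x) ∧ (∀ x, f lam z ≤ f lam x)) := by
  intro A b f
  constructor
  · intro lam h0 h1 t ht0 ht1 x
    exact lasso_key lam h0 h1 t ht0 ht1 x
  · intro lam h0 h1
    refine ⟨![1 - lam - 2*0, (2 - lam + 4*0)/4, 0],
      ![1 - lam - 2*((1-lam)/4), (2 - lam + 4*((1-lam)/4))/4, (1-lam)/4], ?_, ?_, ?_⟩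
    · intro h
      have := congrFun h 2
      simp only [Matrix.cons_val_two, Matrix.tail_cons, Matrix.head_cons] at this
      linarith
    · exact fun x => lasso_key lam h0 h1 0 le_rfl (by linarith) x
    · exact fun x => lasso_key lam h0 h1 ((1-lam)/4) (by linarith) (by linarith) x
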